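/- Let C be a real symmetric n×n positive semidefinite matrix whose r-th smallest eigenvalue is strictly less than its (r+1)-th smallest eigenvalue. If A and B are two orthogonal matrices in O(n) that both diagonalize C with the r smallest eigenvalues placed in the upper-left block (i.e., A^T C A and B^T C B are both diagonal with eigenvalues sorted so the r smallest come first), then there exists à ∈ O(r, n−r) with A = B Ã. -/

import Mathlib

open Matrix

/-- Lemma 1: Let C be real symmetric PSD with eigenvalues λ sorted
nondecreasingly and with a strict gap between the r smallest and the rest. If orthogonal
A and B both diagonalize C with the r smallest eigenvalues in the upper-left block, then
A = B Ã for some Ã ∈ O(r, n−r) (block-diagonal orthogonal). -/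
theorem stmt8 (n r : ℕ) (hrn : r ≤ n)
    (C : Matrix (Fin n) (Fin n) ℝ) (hC : C.PosSemidef)
    (lam : Fin n → ℝ) (hmono : Monotone lam)
    (hgap : ∀ i j : Fin n, (i : ℕ) < r → r ≤ (j : ℕ) → lam i < lam j)
    (A B : Matrix (Fin n) (Fin n) ℝ)
    (hA : Aᵀ * A = 1) (hA' : A * Aᵀ = 1)
    (hB : Bᵀ * B = 1) (hB' : B * Bᵀ = 1)
    (hAdiag : Aᵀ * C * A = Matrix.diagonal lam)
    (hBdiag : Bᵀ * C * B = Matrix.diagonal lam) :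
    ∃ (Arr : Matrix (Fin r) (Fin r) ℝ) (Ass : Matrix (Fin (n - r)) (Fin (n - r)) ℝ),
      Arrᵀ * Arr = 1 ∧ Assᵀ * Ass = 1 ∧
      A = B * Matrix.reindex (finSumFinEquiv.trans (finCongr (Nat.add_sub_cancel' hrn)))
            (finSumFinEquiv.trans (finCongr (Nat.add_sub_cancel' hrn)))
            (Matrix.fromBlocks Arr 0 0 Ass) := by
  set e : Fin r ⊕ Fin (n - r) ≃ Fin n :=
    finSumFinEquiv.trans (finCongr (Nat.add_sub_cancel' hrn)) with he
  set M : Matrix (Fin n) (Fin n) ℝ := Bᵀ * A with hMdef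
  have hMo : Mᵀ * M = 1 := by
    rw [hMdef, transpose_mul, transpose_transpose, Matrix.mul_assoc,
      ← Matrix.mul_assoc B, hB', Matrix.one_mul, hA]
  have hMo' : M * Mᵀ = 1 := by
    rw [hMdef, transpose_mul, transpose_transpose, Matrix.mul_assoc,
      ← Matrix.mul_assoc A, hA', Matrix.one_mul, hB]
  have hC1 : B * Matrix.diagonal lam * Bᵀ = C := by
    rw [← hBdiag]
    calc B * (Bᵀ * C * B) * Bᵀ = (B * Bᵀ) * C * (B * Bᵀ) := by
          simp only [Matrix.mul_assoc]
      _ = C := by rw [hB']; simp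
  have hmid : Mᵀ * Matrix.diagonal lam * M = Matrix.diagonal lam := by
    rw [hMdef, transpose_mul, transpose_transpose]
    calc Aᵀ * B * Matrix.diagonal lam * (Bᵀ * A)
        = Aᵀ * (B * Matrix.diagonal lam * Bᵀ) * A := by
          simp only [Matrix.mul_assoc]
      _ = Matrix.diagonal lam := by rw [hC1, hAdiag]
  have hcomm : M * Matrix.diagonal lam = Matrix.diagonal lam * M := by
    have := congrArg (fun X => M * X) hmid
    simpa [← Matrix.mul_assoc, hMo', Matrix.one_mul] using this.symm
  have hentry : ∀ i j, M i j * lam j = lam i * M i j := by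
    intro i j
    have h : (M * Matrix.diagonal lam) i j = (Matrix.diagonal lam * M) i j :=
      congrFun (congrFun hcomm i) j
    rwa [Matrix.mul_diagonal, Matrix.diagonal_mul] at h
  have hzero : ∀ i j : Fin n,
      (((i : ℕ) < r ∧ r ≤ (j : ℕ)) ∨ ((j : ℕ) < r ∧ r ≤ (i : ℕ))) → M i j = 0 := by
    intro i j h
    rcases h with ⟨h1, h2⟩ | ⟨h1, h2⟩
    · have hlt := hgap i j h1 h2
      have h0 : M i j * (lam j - lam i) = 0 := by linear_combination hentry i j
      rcases mul_eq_zero.mp h0 with h' | h'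
      · exact h'
      · exact absurd h' (sub_ne_zero_of_ne (ne_of_lt hlt).symm)
    · have hlt := hgap j i h1 h2
      have h0 : M i j * (lam j - lam i) = 0 := by linear_combination hentry i j
      rcases mul_eq_zero.mp h0 with h' | h'
      · exact h'
      · exact absurd h' (sub_ne_zero_of_ne (ne_of_gt hlt).symm)
  set Arr : Matrix (Fin r) (Fin r) ℝ :=
    fun i j => M (e (Sum.inl i)) (e (Sum.inl j)) with hArr
  set Ass : Matrix (Fin (n - r)) (Fin (n - r)) ℝ :=
    fun i j => M (e (Sum.inr i)) (e (Sum.inr j)) with hAss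
  have hvl : ∀ i : Fin r, ((e (Sum.inl i) : Fin n) : ℕ) = (i : ℕ) := by
    intro i; simp [he]
  have hvr : ∀ j : Fin (n - r), ((e (Sum.inr j) : Fin n) : ℕ) = r + (j : ℕ) := by
    intro j; simp [he]
  have hMblock : M.submatrix e e = fromBlocks Arr 0 0 Ass := by
    ext i j
    cases i with
    | inl i =>
      cases j with
      | inl j => rfl
      | inr j =>
        show M (e (Sum.inl i)) (e (Sum.inr j)) = 0
        exact hzero _ _ (Or.inl ⟨by rw [hvl]; exact i.2, by rw [hvr]; omega⟩)
    | inr i =>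
      cases j with
      | inl j =>
        show M (e (Sum.inr i)) (e (Sum.inl j)) = 0
        exact hzero _ _ (Or.inr ⟨by rw [hvl]; exact j.2, by rw [hvr]; omega⟩)
      | inr j => rfl
  have hMeq : M = (fromBlocks Arr 0 0 Ass).submatrix e.symm e.symm := by
    rw [← hMblock]
    ext i j
    simp
  have hbo : (fromBlocks Arr 0 0 Ass)ᵀ * (fromBlocks Arr 0 0 Ass) = 1 := by
    rw [← hMblock, Matrix.transpose_submatrix, Matrix.submatrix_mul_equiv, hMo,
      Matrix.submatrix_one_equiv]
  rw [Matrix.fromBlocks_transpose, Matrix.fromBlocks_multiply] at hbo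
  simp only [Matrix.mul_zero, Matrix.zero_mul, Matrix.transpose_zero, add_zero, zero_add] at hbo
  rw [← Matrix.fromBlocks_one] at hbo
  have h11 : Arrᵀ * Arr = 1 := by
    have := congrArg Matrix.toBlocks₁₁ hbo
    simp [Matrix.toBlocks₁₁, Matrix.fromBlocks] at this
    exact this
  have h22 : Assᵀ * Ass = 1 := by
    have := congrArg Matrix.toBlocks₂₂ hbo
    simp [Matrix.toBlocks₂₂, Matrix.fromBlocks] at this
    exact this
  refine ⟨Arr, Ass, h11, h22, ?_⟩
  have hfin : A = B * M := by
    rw [hMdef, ← Matrix.mul_assoc, hB', Matrix.one_mul]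
  rw [hfin, hMeq]
  rfl
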